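/- Let L ≥ 2, pm : Fin L → ℝ strictly increasing, a : Fin L → ℝ nonnegative, S the multiset of extended metrics. For any k < L − 1, it is possible that |{s ∈ S : s > pm k}| > L; concretely, there exist such pm and a with strictly more than L extended metrics exceeding pm k. -/

import Mathlib

/-- Tightness: for any index `k < L - 1`, a rejection threshold `RT = pm k`
can prune strictly more than `L` of the `2L` extensions. -/
theorem tight_RT_overprunes
    (L : ℕ) (hL : 2 ≤ L) (k : ℕ) (hk : k < L - 1) :
    ∃ pm a : Fin L → ℝ, StrictMono pm ∧ (∀ l, 0 ≤ a l) ∧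
      L < ((((Finset.univ : Finset (Fin L)).val.map pm +
        (Finset.univ : Finset (Fin L)).val.map (fun l => pm l + a l))).filter
          (fun s => pm ⟨k, by omega⟩ < s)).card := by
  refine ⟨fun l => (l : ℝ), fun _ => (L : ℝ), ?_, fun l => by positivity, ?_⟩
  · intro i j hij
    simp only
    exact_mod_cast hij
  · rw [Multiset.filter_add, Multiset.card_add]
    have h2 : ((Finset.univ : Finset (Fin L)).val.map
        (fun l : Fin L => (l : ℝ) + (L : ℝ))).filter
        (fun s => ((⟨k, by omega⟩ : Fin L) : ℝ) < s) =
        (Finset.univ : Finset (Fin L)).val.map (fun l : Fin L => (l : ℝ) + (L : ℝ)) := by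
      apply Multiset.filter_eq_self.2
      intro s hs
      simp only [Multiset.mem_map] at hs
      obtain ⟨l, _, rfl⟩ := hs
      have hk' : (k : ℝ) < L := by exact_mod_cast (by omega : k < L)
      have : (0:ℝ) ≤ (l : ℝ) := by positivity
      show (((⟨k, by omega⟩ : Fin L) : ℕ) : ℝ) < _
      push_cast
      linarith
    rw [h2, Multiset.card_map, Finset.card_val, Finset.card_univ, Fintype.card_fin]
    have hmem : ((L - 1 : ℕ) : ℝ) ∈ (((Finset.univ : Finset (Fin L)).val.map
        (fun l : Fin L => (l : ℝ))).filter
        (fun s => ((⟨k, by omega⟩ : Fin L) : ℝ) < s)) := by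
      rw [Multiset.mem_filter]
      refine ⟨Multiset.mem_map.2 ⟨⟨L - 1, by omega⟩, Finset.mem_univ_val _, by simp⟩, ?_⟩
      show (((⟨k, by omega⟩ : Fin L) : ℕ) : ℝ) < _
      exact_mod_cast (by omega : k < L - 1)
    have hpos : 0 < Multiset.card (((Finset.univ : Finset (Fin L)).val.map
        (fun l : Fin L => (l : ℝ))).filter
        (fun s => ((⟨k, by omega⟩ : Fin L) : ℝ) < s)) :=
      Multiset.card_pos.2 fun h => by rw [h] at hmem; exact Multiset.notMem_zero _ hmem
    exact Nat.lt_add_of_pos_left hpos
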